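/- arXiv:2412.14919 — 3 statements merged into one kernel-verified Lean document; each statement's English description precedes it below -/
import Mathlib

section
/- Let G be a sorting network on n wires with K comparators, x̂ ∈ [0,1]^n, and v_1 ≤ v_2 ≤ … ≤ v_n nonnegative coefficients. Then the point (x̃^0,…,x̃^K) with x̃^k_{φ(l,k)} = x̂_l minimizes ∑_{l=1}^n v_l x^K_l over the sorting network polytope P(G, x̂); in particular, min over P(G,x̂) of ∑_l v_l x^K_l equals ∑_l v_l times the l-th smallest entry of x̂. -/
/-- One comparator step of a comparison network: `q w` is the entry currently on wire
`w`; the comparator `c = (i, j)` swaps the entries on wires `i` and `j` whenever the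
value on wire `j` is at most the value on wire `i`. -/
noncomputable def sortStep {n : ℕ} (x : Fin n → ℝ) (c : Fin n × Fin n) (q : Fin n → Fin n) :
    Fin n → Fin n :=
  if x (q c.2) ≤ x (q c.1) then q ∘ Equiv.swap c.1 c.2 else q

/-- After executing the comparison network `G` on input `x`, `wireEntry x G w` is the
index of the entry of `x` located on wire `w`. -/
noncomputable def wireEntry {n : ℕ} (x : Fin n → ℝ) (G : List (Fin n × Fin n)) : Fin n → Fin n :=
  G.foldl (fun q c => sortStep x c q) id

lemma wireEntry_take_succ {n : ℕ} (x : Fin n → ℝ) (G : List (Fin n × Fin n)) (k : ℕ)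
    (hk : k < G.length) :
    wireEntry x (G.take (k + 1)) = sortStep x (G.get ⟨k, hk⟩) (wireEntry x (G.take k)) := by
  unfold wireEntry
  rw [List.take_succ]
  have h : G[k]? = some (G.get ⟨k, hk⟩) := by
    rw [List.getElem?_eq_getElem hk]; rfl
  rw [h, List.foldl_append]
  rfl

lemma wireEntry_exists_perm {n : ℕ} (x : Fin n → ℝ) (G : List (Fin n × Fin n)) :
    ∃ e : Equiv.Perm (Fin n), wireEntry x G = ⇑e := by
  unfold wireEntry
  suffices h : ∀ (q : Fin n → Fin n), (∃ e : Equiv.Perm (Fin n), q = ⇑e) →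
      ∃ e : Equiv.Perm (Fin n), G.foldl (fun q c => sortStep x c q) q = ⇑e by
    exact h id ⟨Equiv.refl _, rfl⟩
  induction G with
  | nil => intro q hq; exact hq
  | cons c G ih =>
    intro q hq
    obtain ⟨e, he⟩ := hq
    simp only [List.foldl_cons]
    apply ih
    unfold sortStep
    split
    · exact ⟨(Equiv.swap c.1 c.2).trans e, by subst he; rfl⟩
    · exact ⟨e, he⟩

/-- The key facts about one comparator step. -/
lemma sortStep_spec {n : ℕ} (x : Fin n → ℝ) (c : Fin n × Fin n) (q : Fin n → Fin n) :
    x (sortStep x c q c.1) ≤ x (q c.1) ∧ x (sortStep x c q c.1) ≤ x (q c.2) ∧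
    x (q c.1) ≤ x (sortStep x c q c.2) ∧ x (q c.2) ≤ x (sortStep x c q c.2) ∧
    x (sortStep x c q c.1) + x (sortStep x c q c.2) = x (q c.1) + x (q c.2) ∧
    ∀ l, l ≠ c.1 → l ≠ c.2 → sortStep x c q l = q l := by
  unfold sortStep
  split
  · rename_i h
    by_cases hc : c.1 = c.2
    · simp [← hc, Equiv.swap_self]
    · simp only [Function.comp_apply, Equiv.swap_apply_left, Equiv.swap_apply_right]
      exact ⟨h, le_refl _, le_refl _, h, add_comm _ _,
        fun l h1 h2 => by rw [Equiv.swap_apply_of_ne_of_ne h1 h2]⟩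
  · rename_i h
    have h' := le_of_not_ge h
    exact ⟨le_refl _, h', h', le_refl _, rfl, fun _ _ _ => rfl⟩


/-- Membership in the sorting network polytope `P(G, x̂)`: `X 0 = x̂`, all coordinates in
`[0,1]`, and for each comparator `(i_k, j_k)`:
`x^{k+1}_{i_k} ≤ min{x^k_{i_k}, x^k_{j_k}}`, `x^{k+1}_{j_k} ≥ max{x^k_{i_k}, x^k_{j_k}}`,
`x^{k+1}_{i_k} + x^{k+1}_{j_k} = x^k_{i_k} + x^k_{j_k}`, and all other coordinates are
copied. -/
def InSNP {n : ℕ} (G : List (Fin n × Fin n)) (xh : Fin n → ℝ) (X : ℕ → Fin n → ℝ) :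
    Prop :=
  X 0 = xh ∧
  (∀ k ≤ G.length, ∀ l, X k l ∈ Set.Icc (0 : ℝ) 1) ∧
  ∀ k : Fin G.length,
    X (k + 1) (G.get k).1 ≤ X k (G.get k).1 ∧
    X (k + 1) (G.get k).1 ≤ X k (G.get k).2 ∧
    X k (G.get k).1 ≤ X (k + 1) (G.get k).2 ∧
    X k (G.get k).2 ≤ X (k + 1) (G.get k).2 ∧
    X (k + 1) (G.get k).1 + X (k + 1) (G.get k).2 = X k (G.get k).1 + X k (G.get k).2 ∧
    ∀ l, l ≠ (G.get k).1 → l ≠ (G.get k).2 → X (k + 1) l = X k l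

/-- for non-decreasing nonnegative coefficients `v`, the point with
`x̃^k_{φ(l,k)} = x̂_l` minimizes `∑_l v_l x^K_l` over the sorting network polytope
`P(G, x̂)`; the minimum equals `∑_l v_l` times the `l`-th smallest entry of `x̂`. -/
theorem sorted_point_minimizes (n : ℕ) (G : List (Fin n × Fin n))
    (hG : ∀ c ∈ G, c.1 < c.2)
    (hsort : ∀ y : Fin n → ℝ, Monotone fun w => y (wireEntry y G w))
    (xh : Fin n → ℝ) (hx : ∀ l, xh l ∈ Set.Icc (0 : ℝ) 1)
    (v : Fin n → ℝ) (hv : Monotone v) (hv0 : ∀ l, 0 ≤ v l) :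
    IsLeast {s : ℝ | ∃ X : ℕ → Fin n → ℝ, InSNP G xh X ∧ s = ∑ l, v l * X G.length l}
      (∑ l, v l * xh (wireEntry xh G l)) := by
  classical
  constructor
  · -- membership: the trajectory of the actual execution of the network on xh
    refine ⟨fun k w => xh (wireEntry xh (G.take k) w), ⟨rfl, fun k hk l => hx _, ?_⟩, ?_⟩
    · intro k
      have hk : (k : ℕ) < G.length := k.isLt
      have hrec : wireEntry xh (G.take ((k : ℕ) + 1))
          = sortStep xh (G.get k) (wireEntry xh (G.take (k : ℕ))) := by
        rw [wireEntry_take_succ xh G (k : ℕ) hk]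
      obtain ⟨s1, s2, s3, s4, s5, s6⟩ := sortStep_spec xh (G.get k) (wireEntry xh (G.take (k : ℕ)))
      simp only [hrec]
      exact ⟨s1, s2, s3, s4, s5, fun l h1 h2 => by rw [s6 l h1 h2]⟩
    · simp only [List.take_length]
  · -- lower bound
    rintro s ⟨X, ⟨hX0, hXbd, hXc⟩, rfl⟩
    obtain ⟨e, he⟩ := wireEntry_exists_perm xh G
    set y : Fin n → ℝ := fun w => v (e.symm w) with hy
    obtain ⟨e', he'⟩ := wireEntry_exists_perm y G
    -- at the end of the run on y, wire w holds value v w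
    have hveq : ∀ w, y (wireEntry y G w) = v w := by
      have h1 : Monotone (v ∘ ⇑(e'.trans e.symm)) := by
        have := hsort y
        rw [he'] at this
        exact this
      have h2 : Monotone (v ∘ ⇑(Equiv.refl (Fin n))) := by simpa using hv
      have h3 := Tuple.unique_monotone h1 h2
      intro w
      have := congrFun h3 w
      rw [he']
      exact this
    -- main induction
    have main : ∀ k ≤ G.length,
        (∑ l, v (e.symm l) * xh l) ≤ ∑ w, y (wireEntry y (G.take k) w) * X k w := by
      intro k
      induction k with
      | zero =>
        intro _
        rw [hX0]
        exact le_of_eq rfl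
      | succ k ih =>
        intro hk1
        have hk : k < G.length := Nat.lt_of_succ_le hk1
        refine le_trans (ih hk.le) ?_
        set c := G.get ⟨k, hk⟩ with hc
        have hij : c.1 ≠ c.2 := Fin.ne_of_lt (hG c (by rw [hc]; exact List.get_mem G ⟨k, hk⟩))
        set T := wireEntry y (G.take k) with hT
        have hrec : wireEntry y (G.take (k + 1)) = sortStep y c T :=
          wireEntry_take_succ y G k hk
        obtain ⟨h1, h2, h3, h4, h5, h6⟩ := hXc ⟨k, hk⟩
        simp only [← hc] at h1 h2 h3 h4 h5 h6
        rw [hrec]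
        -- all terms except c.1, c.2 coincide
        have key : ∀ w, w ≠ c.1 → w ≠ c.2 →
            y (sortStep y c T w) * X (k + 1) w = y (T w) * X k w := by
          intro w hw1 hw2
          rw [h6 w hw1 hw2]
          congr 2
          unfold sortStep
          split
          · simp [Equiv.swap_apply_of_ne_of_ne hw1 hw2]
          · rfl
        have hdiff : (∑ w, y (sortStep y c T w) * X (k + 1) w) - ∑ w, y (T w) * X k w
            = (y (sortStep y c T c.1) * X (k + 1) c.1 - y (T c.1) * X k c.1)
            + (y (sortStep y c T c.2) * X (k + 1) c.2 - y (T c.2) * X k c.2) := by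
          rw [← Finset.sum_sub_distrib,
            ← Finset.sum_subset (Finset.subset_univ ({c.1, c.2} : Finset (Fin n)))
              (fun w _ hw => by
                simp only [Finset.mem_insert, Finset.mem_singleton, not_or] at hw
                rw [key w hw.1 hw.2, sub_self]),
            Finset.sum_pair hij]
        rw [← sub_nonneg, hdiff]
        -- compute the new weights at c.1, c.2
        unfold sortStep
        split
        · rename_i h
          simp only [Function.comp_apply, Equiv.swap_apply_left, Equiv.swap_apply_right]
          have e5 : y (T c.2) * (X (k + 1) c.1 + X (k + 1) c.2)
              = y (T c.2) * (X k c.1 + X k c.2) := by rw [h5]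
          nlinarith [mul_nonneg (sub_nonneg.2 h) (sub_nonneg.2 h3), e5]
        · rename_i h
          have h' := le_of_not_ge h
          have e5 : y (T c.1) * (X (k + 1) c.1 + X (k + 1) c.2)
              = y (T c.1) * (X k c.1 + X k c.2) := by rw [h5]
          nlinarith [mul_nonneg (sub_nonneg.2 h') (sub_nonneg.2 h4), e5]
    have hM : (∑ l, v l * xh (wireEntry xh G l)) = ∑ l, v (e.symm l) * xh l := by
      rw [he]
      rw [← Equiv.sum_comp e (fun w => v (e.symm w) * xh w)]
      simp
    have hfin := main G.length (le_refl _)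
    rw [hM]
    refine le_trans hfin (le_of_eq ?_)
    rw [List.take_length]
    exact Finset.sum_congr rfl (fun w _ => by rw [hveq w])
end

section
/- For every i* ∈ {2,…,n} and every τ ∈ {1,2}^{{2,…,i*−1}}, the inequality x_{1,1} + x_{1,2} + ∑_{i=2}^{i*−1} x_{i,τ_i} + x_{i*,1} + x_{i*,2} ≤ i* is valid for all binary matrices x ∈ {0,1}^{n×2} satisfying ∑_{i=1}^n 2^{n−i}(x_{i,1} + x_{i,2}) ≤ 2^n − 1; moreover, x_{1,1} + x_{1,2} ≤ 1 is also valid. -/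
open Finset

lemma fin2_le_sum (f : Fin 2 → ℕ) (j : Fin 2) : f j ≤ f 0 + f 1 :=
  match j with
  | 0 => Nat.le_add_right _ _
  | 1 => Nat.le_add_left _ _

lemma pow_sum_aux (n : ℕ) : ∀ k, k ≤ n → (∑ i ∈ Finset.range k, 2^(n-1-i)) + 2^(n-k) = 2^n := by
  intro k
  induction k with
  | zero => simp
  | succ k ih =>
    intro hk
    have h1 : k < n := hk
    have ih' := ih (le_of_lt h1)
    rw [Finset.sum_range_succ]
    have he : n - 1 - k = n - (k+1) := by omega
    rw [he]
    have h2 : 2^(n-(k+1)) + 2^(n-(k+1)) = 2^(n-k) := by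
      have h3 : n - k = (n - (k+1)) + 1 := by omega
      rw [h3, pow_succ]; ring
    omega

/-- the lifted cover inequalities of the complemented orbisack knapsack
`∑_i 2^{n−i}(x_{i,1} + x_{i,2}) ≤ 2^n − 1` are valid (indices `0`-based: row `0` is the
first row, `istar` is the `0`-based version of `i* ∈ {2,…,n}`, and `τ` selects one
column per intermediate row). -/
theorem orbisack_lci_valid (n : ℕ) (hn : 0 < n) (x : Fin n → Fin 2 → ℕ)
    (hx : ∀ i j, x i j = 0 ∨ x i j = 1)
    (hK : ∑ i : Fin n, 2 ^ (n - 1 - (i : ℕ)) * (x i 0 + x i 1) ≤ 2 ^ n - 1) :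
    x ⟨0, hn⟩ 0 + x ⟨0, hn⟩ 1 ≤ 1 ∧
    ∀ istar : Fin n, 0 < (istar : ℕ) → ∀ τ : Fin n → Fin 2,
      x ⟨0, hn⟩ 0 + x ⟨0, hn⟩ 1 +
        (∑ i ∈ Finset.univ.filter
          (fun i : Fin n => 0 < (i : ℕ) ∧ (i : ℕ) < (istar : ℕ)), x i (τ i)) +
        x istar 0 + x istar 1 ≤ (istar : ℕ) + 1 := by
  have hle1 : ∀ (i : Fin n) (j : Fin 2), x i j ≤ 1 := fun i j => by
    rcases hx i j with h | h <;> omega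
  have hpos : 1 ≤ 2^n := Nat.one_le_two_pow
  have part1 : x ⟨0, hn⟩ 0 + x ⟨0, hn⟩ 1 ≤ 1 := by
    by_contra h
    push_neg at h
    have hkey : 2^n ≤ ∑ i : Fin n, 2 ^ (n - 1 - (i : ℕ)) * (x i 0 + x i 1) := by
      calc 2^n = 2^(n-1) * 2 := by rw [← pow_succ]; congr 1; omega
        _ ≤ 2^(n-1-((⟨0,hn⟩ : Fin n) : ℕ)) * (x ⟨0,hn⟩ 0 + x ⟨0,hn⟩ 1) := by
            simp only [Nat.sub_zero]
            exact Nat.mul_le_mul_left _ h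
        _ ≤ _ := Finset.single_le_sum (f := fun i : Fin n => 2 ^ (n - 1 - (i : ℕ)) * (x i 0 + x i 1))
              (fun i _ => Nat.zero_le _) (Finset.mem_univ _)
    omega
  refine ⟨part1, ?_⟩
  intro istar hist τ
  set k : ℕ := (istar : ℕ) with hkdef
  have hkn : k < n := istar.isLt
  by_contra h
  push_neg at h
  set s : Finset (Fin n) := Finset.univ.filter (fun i : Fin n => 0 < (i : ℕ) ∧ (i : ℕ) < k) with hsdef
  have hcard : s.card ≤ k - 1 := by
    have := Finset.card_le_card_of_injOn (s := s) (f := Fin.val) (t := Finset.Ioo 0 k)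
      (fun a ha => by
        rw [hsdef] at ha
        simp only [Finset.mem_coe, Finset.mem_filter, Finset.mem_univ, true_and] at ha
        simp [Finset.mem_Ioo, ha.1, ha.2])
      (fun a _ b _ hab => Fin.ext hab)
    simpa using this
  have hSle : (∑ i ∈ s, x i (τ i)) ≤ s.card := by
    calc (∑ i ∈ s, x i (τ i)) ≤ ∑ i ∈ s, 1 := Finset.sum_le_sum (fun i _ => hle1 i (τ i))
      _ = s.card := by simp
  have hc0 := hle1 istar 0
  have hc1 := hle1 istar 1
  -- forced values
  have hS1 : s.card ≤ ∑ i ∈ s, x i (τ i) := by omega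
  have hall : ∀ i ∈ s, x i (τ i) = 1 := by
    by_contra hc
    push_neg at hc
    obtain ⟨i0, hi0, hne⟩ := hc
    have hzero : x i0 (τ i0) < 1 := by rcases hx i0 (τ i0) with h' | h' <;> omega
    have : (∑ i ∈ s, x i (τ i)) < ∑ i ∈ s, 1 :=
      Finset.sum_lt_sum (fun i _ => hle1 i (τ i)) ⟨i0, hi0, hzero⟩
    simp only [Finset.sum_const, smul_eq_mul, mul_one] at this
    omega
  have ha1 : x ⟨0, hn⟩ 0 + x ⟨0, hn⟩ 1 = 1 := by omega
  have hck0 : x istar 0 = 1 := by omega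
  have hck1 : x istar 1 = 1 := by omega
  -- lower bound for the knapsack
  have hstep : ∀ i : Fin n,
      (if (i:ℕ) < k then 2^(n-1-(i:ℕ)) else if (i:ℕ) = k then 2^(n-k) else 0)
        ≤ 2 ^ (n - 1 - (i : ℕ)) * (x i 0 + x i 1) := by
    intro i
    by_cases h0 : (i:ℕ) = 0
    · have hi : i = ⟨0, hn⟩ := Fin.ext h0
      rw [hi, ha1, mul_one]
      rw [if_pos (show ((⟨0,hn⟩ : Fin n) : ℕ) < k from hist)]
    · by_cases h1 : (i:ℕ) < k
      · have hmem : i ∈ s := by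
          simp only [hsdef, Finset.mem_filter, Finset.mem_univ, true_and]
          exact ⟨Nat.pos_of_ne_zero h0, h1⟩
        have hone := hall i hmem
        have hle : 1 ≤ x i 0 + x i 1 := by
          have := fin2_le_sum (x i) (τ i)
          omega
        simp only [h1, if_pos]
        calc 2^(n-1-(i:ℕ)) = 2^(n-1-(i:ℕ)) * 1 := (mul_one _).symm
          _ ≤ _ := Nat.mul_le_mul_left _ hle
      · by_cases h2 : (i:ℕ) = k
        · have hi : i = istar := Fin.ext (h2.trans hkdef)
          rw [hi, hck0, hck1, ← hkdef]
          rw [if_neg (lt_irrefl k), if_pos rfl]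
          have hpow : (2:ℕ)^(n-k) = 2^(n-1-k) * 2 := by
            rw [← pow_succ]; congr 1; omega
          omega
        · simp only [h1, h2, if_neg, ite_false]
          exact Nat.zero_le _
  have hsum : (∑ i : Fin n,
      (if (i:ℕ) < k then 2^(n-1-(i:ℕ)) else if (i:ℕ) = k then 2^(n-k) else 0)) = 2^n := by
    rw [Fin.sum_univ_eq_sum_range (fun i => if i < k then 2^(n-1-i) else if i = k then 2^(n-k) else 0)]
    rw [← Finset.sum_subset (Finset.range_subset_range.2 (show k+1 ≤ n from hkn))
      (fun i _ hi => by
        simp only [Finset.mem_range, not_lt] at hi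
        have : ¬ i < k := by omega
        have h2 : ¬ i = k := by omega
        simp [this, h2])]
    rw [Finset.sum_range_succ]
    simp only [lt_irrefl, ite_false, ite_true]
    have : (∑ i ∈ Finset.range k, (if i < k then 2^(n-1-i) else if i = k then 2^(n-k) else 0))
        = ∑ i ∈ Finset.range k, 2^(n-1-i) :=
      Finset.sum_congr rfl (fun i hi => by simp [Finset.mem_range.1 hi])
    rw [this]
    exact pow_sum_aux n k (le_of_lt hkn)
  have hkey : 2^n ≤ ∑ i : Fin n, 2 ^ (n - 1 - (i : ℕ)) * (x i 0 + x i 1) := by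
    rw [← hsum]
    exact Finset.sum_le_sum (fun i _ => hstep i)
  omega
end

section
/- Let x ∈ [0,1]^{n×2} and y ∈ [−1,0]^{n−2} satisfy −x_{i,1} ≤ y_i and x_{i,2} ≤ 1 + y_i for all i ∈ {2,…,n−1}, as well as −x_{1,1} + x_{1,2} − x_{i*,1} + x_{i*,2} + ∑_{i=2}^{i*−1} y_i ≤ 0 for some i* ∈ {2,…,n}. Then for every τ ∈ {1,2}^{{2,…,i*−1}}, x satisfies −x_{1,1} + x_{1,2} − x_{i*,1} + x_{i*,2} − ∑_{i: τ_i=1} x_{i,1} − ∑_{i: τ_i=2} x_{i,2} ≤ i* − T(τ) − 2, where T(τ) = |{i ∈ {2,…,i*−1} : τ_i = 1}|. -/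
/-- the extended-formulation constraints for the orbisack imply the lifted
cover inequalities (in original orbisack variables). Rows are `0`-indexed: row `0` is
the first row, `istar` is the `0`-based version of `i* ∈ {2,…,n}`, `τ i = 0` means
`τ_i = 1` (first column) and `τ i = 1` means `τ_i = 2` (second column), and
`T(τ) = |{i : τ_i = 1}|`. -/
theorem orbisack_ef_implies_lci (n : ℕ) (hn : 0 < n)
    (x : Fin n → Fin 2 → ℝ) (y : Fin n → ℝ)
    (hx : ∀ i j, x i j ∈ Set.Icc (0 : ℝ) 1)
    (hy : ∀ i : Fin n, 0 < (i : ℕ) → (i : ℕ) < n - 1 → y i ∈ Set.Icc (-1 : ℝ) 0)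
    (h1 : ∀ i : Fin n, 0 < (i : ℕ) → (i : ℕ) < n - 1 → -x i 0 ≤ y i)
    (h2 : ∀ i : Fin n, 0 < (i : ℕ) → (i : ℕ) < n - 1 → x i 1 ≤ 1 + y i)
    (istar : Fin n) (histar : 0 < (istar : ℕ))
    (h3 : -x ⟨0, hn⟩ 0 + x ⟨0, hn⟩ 1 - x istar 0 + x istar 1 +
      (∑ i ∈ Finset.univ.filter
        (fun i : Fin n => 0 < (i : ℕ) ∧ (i : ℕ) < (istar : ℕ)), y i) ≤ 0)
    (τ : Fin n → Fin 2) :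
    -x ⟨0, hn⟩ 0 + x ⟨0, hn⟩ 1 - x istar 0 + x istar 1 -
      (∑ i ∈ Finset.univ.filter
        (fun i : Fin n => (0 < (i : ℕ) ∧ (i : ℕ) < (istar : ℕ)) ∧ τ i = 0), x i 0) -
      (∑ i ∈ Finset.univ.filter
        (fun i : Fin n => (0 < (i : ℕ) ∧ (i : ℕ) < (istar : ℕ)) ∧ τ i = 1), x i 1)
      ≤ ((istar : ℕ) : ℝ) + 1 -
        ((Finset.univ.filter
          (fun i : Fin n => (0 < (i : ℕ) ∧ (i : ℕ) < (istar : ℕ)) ∧ τ i = 0)).card : ℝ)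
        - 2 := by
  classical
  set S0 := Finset.univ.filter
      (fun i : Fin n => (0 < (i : ℕ) ∧ (i : ℕ) < (istar : ℕ)) ∧ τ i = 0) with hS0
  set S1 := Finset.univ.filter
      (fun i : Fin n => (0 < (i : ℕ) ∧ (i : ℕ) < (istar : ℕ)) ∧ τ i = 1) with hS1
  set S := Finset.univ.filter
      (fun i : Fin n => 0 < (i : ℕ) ∧ (i : ℕ) < (istar : ℕ)) with hS
  have h01 : ∀ a : Fin 2, a = 0 ∨ a = 1 := by decide
  have hunion : S0 ∪ S1 = S := by
    ext i
    simp only [hS0, hS1, hS, Finset.mem_union, Finset.mem_filter, Finset.mem_univ, true_and]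
    constructor
    · rintro (⟨h, _⟩ | ⟨h, _⟩) <;> exact h
    · intro h
      rcases h01 (τ i) with h' | h'
      · exact Or.inl ⟨h, h'⟩
      · exact Or.inr ⟨h, h'⟩
  have hdisj : Disjoint S0 S1 := by
    rw [Finset.disjoint_left]
    intro i hi0 hi1
    simp only [hS0, hS1, Finset.mem_filter, Finset.mem_univ, true_and] at hi0 hi1
    rw [hi0.2] at hi1
    exact absurd hi1.2 (by decide)
  have hScard : S.card = (istar : ℕ) - 1 := by
    have : S.card = (Finset.Ioo 0 (istar : ℕ)).card := by
      apply Finset.card_bij (fun (a : Fin n) _ => (a : ℕ))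
      · intro a ha
        simp only [hS, Finset.mem_filter, Finset.mem_univ, true_and] at ha
        simp [Finset.mem_Ioo, ha.1, ha.2]
      · intro a ha b hb hab
        exact Fin.val_injective hab
      · intro b hb
        simp only [Finset.mem_Ioo] at hb
        refine ⟨⟨b, lt_trans hb.2 istar.isLt⟩, ?_, rfl⟩
        simp only [hS, Finset.mem_filter, Finset.mem_univ, true_and]
        exact ⟨hb.1, hb.2⟩
    rw [this, Nat.card_Ioo]
    omega
  have hmem : ∀ i ∈ S, 0 < (i : ℕ) ∧ (i : ℕ) < n - 1 := by
    intro i hi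
    simp only [hS, Finset.mem_filter, Finset.mem_univ, true_and] at hi
    have := istar.isLt
    omega
  have hsum : (∑ i ∈ S0, (-x i 0)) + (∑ i ∈ S1, (x i 1 - 1)) ≤ ∑ i ∈ S, y i := by
    rw [← hunion, Finset.sum_union hdisj]
    apply add_le_add
    · apply Finset.sum_le_sum
      intro i hi
      have hi' := hmem i (hunion ▸ Finset.mem_union_left S1 hi)
      exact h1 i hi'.1 hi'.2
    · apply Finset.sum_le_sum
      intro i hi
      have hi' := hmem i (hunion ▸ Finset.mem_union_right S0 hi)
      have := h2 i hi'.1 hi'.2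
      linarith
  have hcards : (S0.card : ℝ) + S1.card = ((istar : ℕ) : ℝ) - 1 := by
    have h' : S0.card + S1.card = (istar : ℕ) - 1 := by
      rw [← Finset.card_union_of_disjoint hdisj, hunion, hScard]
    calc (S0.card : ℝ) + S1.card = ((S0.card + S1.card : ℕ) : ℝ) := by push_cast; ring
      _ = (((istar : ℕ) - 1 : ℕ) : ℝ) := by rw [h']
      _ = ((istar : ℕ) : ℝ) - 1 := by rw [Nat.cast_sub histar]; norm_num
  have hsum0 : (∑ i ∈ S0, (-x i 0)) = -(∑ i ∈ S0, x i 0) := by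
    rw [Finset.sum_neg_distrib]
  have hsum1 : (∑ i ∈ S1, (x i 1 - 1)) = (∑ i ∈ S1, x i 1) - S1.card := by
    rw [Finset.sum_sub_distrib, Finset.sum_const, nsmul_eq_mul, mul_one]
  have hnonneg : 0 ≤ ∑ i ∈ S1, x i 1 :=
    Finset.sum_nonneg fun i _ => (hx i 1).1
  rw [hsum0, hsum1] at hsum
  linarith
end
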